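/- Let v = v_ℓ with ℓ < n be the first vertex of the path P satisfying the cover condition, and set C* := Partition(v) ∩ P_{⪯v}. Then the minimum weight of a vertex cover of P equals ω(C*) plus the minimum weight of a vertex cover of the suffix subpath P_{v≺}; moreover, for every minimum weight vertex cover C' of P_{v≺}, the set C* ∪ C' is a minimum weight vertex cover of P. (Thus the instance can be split at v and the two subpaths solved independently.) -/
import Mathlib


open Finset

/-- `C` is a vertex cover of the subpath of the path `P = (v_0, …, v_{n-1})`
induced by the vertices `v_lo, v_{lo+1}, …, v_{hi-1}` (half-open interval `[lo, hi)`);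
the edges of this subpath are `{v_i, v_{i+1}}` for `lo ≤ i` and `i + 1 < hi`. -/
def IsCoverOn (lo hi : ℕ) (C : Finset ℕ) : Prop :=
  (∀ j ∈ C, lo ≤ j ∧ j < hi) ∧ ∀ i : ℕ, lo ≤ i → i + 1 < hi → (i ∈ C ∨ i + 1 ∈ C)

/-- The total weight `ω(C) = ∑_{v ∈ C} ω(v)` of a set of vertices. -/
def wsum (ω : ℕ → ℝ) (C : Finset ℕ) : ℝ := ∑ j ∈ C, ω j

/-- `C` is a minimum weight vertex cover (MWVC) of the subpath on the vertices `[lo, hi)`. -/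
def IsMWVCOn (ω : ℕ → ℝ) (lo hi : ℕ) (C : Finset ℕ) : Prop :=
  IsCoverOn lo hi C ∧ ∀ D : Finset ℕ, IsCoverOn lo hi D → wsum ω C ≤ wsum ω D

/-- `Partition(v_l) ∩ P_{⪯ v_l}`: the vertices up to (and including) `v_l` lying on the
same side of the path's bipartition as `v_l`. -/
def sameSide (l : ℕ) : Finset ℕ := (range (l + 1)).filter fun j => j % 2 = l % 2

/-- `P_{⪯ v_l} ∖ Partition(v_l)`: the vertices up to `v_l` on the opposite side. -/
def otherSide (l : ℕ) : Finset ℕ := (range (l + 1)).filter fun j => j % 2 ≠ l % 2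

/-- `v_l` satisfies the (weak) cover condition. -/
def CoverCond (ω : ℕ → ℝ) (l : ℕ) : Prop := wsum ω (sameSide l) ≤ wsum ω (otherSide l)

/-- `v_l` satisfies the strict cover condition. -/
def StrictCoverCond (ω : ℕ → ℝ) (l : ℕ) : Prop := wsum ω (sameSide l) < wsum ω (otherSide l)

lemma mem_sameSide {j l : ℕ} : j ∈ sameSide l ↔ j < l + 1 ∧ j % 2 = l % 2 := by
  simp [sameSide]

lemma mem_otherSide {j l : ℕ} : j ∈ otherSide l ↔ j < l + 1 ∧ j % 2 ≠ l % 2 := by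
  simp [otherSide]

lemma sameSide_succ (l : ℕ) : sameSide (l + 1) = insert (l + 1) (otherSide l) := by
  ext j
  simp only [mem_sameSide, mem_otherSide, Finset.mem_insert]
  omega

lemma otherSide_succ (l : ℕ) : otherSide (l + 1) = sameSide l := by
  ext j
  simp only [mem_sameSide, mem_otherSide]
  omega

lemma keyLB (ω : ℕ → ℝ) : ∀ l, (∀ j, j < l → ¬ CoverCond ω j) → ∀ D, IsCoverOn 0 (l + 1) D →
    (l ∈ D → wsum ω (sameSide l) ≤ wsum ω D) ∧
    (l ∉ D → wsum ω (otherSide l) ≤ wsum ω D) := by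
  intro l
  induction l with
  | zero =>
    intro _ D hD
    have hsub : ∀ j ∈ D, j = 0 := fun j hj => by have := hD.1 j hj; omega
    constructor
    · intro h0
      have : D = {0} := by
        apply Finset.Subset.antisymm
        · intro j hj; simp [hsub j hj]
        · intro j hj; simp at hj; subst hj; exact h0
      rw [this]
      have : sameSide 0 = {0} := by decide
      rw [this]
    · intro h0
      have : D = ∅ := by
        apply Finset.eq_empty_of_forall_notMem
        intro j hj; have := hsub j hj; subst this; exact h0 hj
      have h2 : otherSide 0 = ∅ := by decide
      rw [this, h2]
  | succ l ih =>
    intro hfirst D hD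
    have hncc : ¬ CoverCond ω l := hfirst l (by omega)
    have hfirst' : ∀ j, j < l → ¬ CoverCond ω j := fun j hj => hfirst j (by omega)
    have ho_lt : wsum ω (otherSide l) < wsum ω (sameSide l) := by
      unfold CoverCond at hncc; linarith [not_le.mp hncc]
    constructor
    · intro hmem
      set D' := D.erase (l + 1) with hD'
      have hcov' : IsCoverOn 0 (l + 1) D' := by
        constructor
        · intro j hj
          have h1 := hD.1 j (Finset.mem_of_mem_erase hj)
          have h2 := Finset.ne_of_mem_erase hj
          omega
        · intro i _ hi
          rcases hD.2 i (by omega) (by omega) with h | h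
          · left; exact Finset.mem_erase.mpr ⟨by omega, h⟩
          · right; exact Finset.mem_erase.mpr ⟨by omega, h⟩
      have hsplit : wsum ω D = ω (l + 1) + wsum ω D' := by
        rw [hD']; exact (Finset.add_sum_erase D ω hmem).symm
      have hle : wsum ω (otherSide l) ≤ wsum ω D' := by
        rcases Decidable.em (l ∈ D') with h | h
        · linarith [(ih hfirst' D' hcov').1 h]
        · exact (ih hfirst' D' hcov').2 h
      have hnm : l + 1 ∉ otherSide l := by simp [mem_otherSide]
      rw [sameSide_succ]
      unfold wsum
      rw [Finset.sum_insert hnm]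
      unfold wsum at hle hsplit
      linarith
    · intro hmem
      have hlD : l ∈ D := by
        rcases hD.2 l (by omega) (by omega) with h | h
        · exact h
        · exact absurd h hmem
      have hcov' : IsCoverOn 0 (l + 1) D := by
        constructor
        · intro j hj
          have h1 := hD.1 j hj
          have : j ≠ l + 1 := fun he => hmem (he ▸ hj)
          omega
        · intro i _ hi
          exact hD.2 i (by omega) (by omega)
      rw [otherSide_succ]
      exact (ih hfirst' D hcov').1 hlD

lemma prefixLB (ω : ℕ → ℝ) (l : ℕ) (hcc : CoverCond ω l)
    (hfirst : ∀ j, j < l → ¬ CoverCond ω j) :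
    ∀ D, IsCoverOn 0 (l + 1) D → wsum ω (sameSide l) ≤ wsum ω D := by
  intro D hD
  rcases Decidable.em (l ∈ D) with h | h
  · exact (keyLB ω l hfirst D hD).1 h
  · exact le_trans hcc ((keyLB ω l hfirst D hD).2 h)

/-- Let `v_l` (not the last vertex) be the first vertex of the path
satisfying the cover condition and `C* = Partition(v_l) ∩ P_{⪯ v_l}`. Then the minimum
cover weight of the path equals `ω(C*)` plus the minimum cover weight of the suffix
`P_{v_l ≺}`, and `C* ∪ C'` is a MWVC of the path for every MWVC `C'` of the suffix. -/
theorem stmt_6 (n l : ℕ) (ω : ℕ → ℝ) (hl : l + 1 < n)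
    (hcc : CoverCond ω l) (hfirst : ∀ j, j < l → ¬ CoverCond ω j) :
    (∀ C C' : Finset ℕ, IsMWVCOn ω 0 n C → IsMWVCOn ω (l + 1) n C' →
        wsum ω C = wsum ω (sameSide l) + wsum ω C') ∧
      (∀ C' : Finset ℕ, IsMWVCOn ω (l + 1) n C' → IsMWVCOn ω 0 n (sameSide l ∪ C')) := by
  -- union is a cover
  have hunion : ∀ C' : Finset ℕ, IsCoverOn (l + 1) n C' →
      IsCoverOn 0 n (sameSide l ∪ C') := by
    intro C' hC'
    constructor
    · intro j hj
      rcases Finset.mem_union.mp hj with h | h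
      · have := mem_sameSide.mp h; omega
      · have := hC'.1 j h; omega
    · intro i _ hi
      rcases Nat.lt_or_ge i (l + 1) with h | h
      · rcases Nat.lt_or_ge (i + 1) (l + 1) with h2 | h2
        · rcases Decidable.em (i % 2 = l % 2) with hp | hp
          · left; exact Finset.mem_union_left _ (mem_sameSide.mpr ⟨by omega, hp⟩)
          · right; exact Finset.mem_union_left _ (mem_sameSide.mpr ⟨by omega, by omega⟩)
        · have : i = l := by omega
          left; exact Finset.mem_union_left _ (mem_sameSide.mpr ⟨by omega, by rw [this]⟩)
      · rcases hC'.2 i h hi with h2 | h2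
        · left; exact Finset.mem_union_right _ h2
        · right; exact Finset.mem_union_right _ h2
  -- disjoint sum
  have hdisj : ∀ C' : Finset ℕ, IsCoverOn (l + 1) n C' →
      wsum ω (sameSide l ∪ C') = wsum ω (sameSide l) + wsum ω C' := by
    intro C' hC'
    unfold wsum
    apply Finset.sum_union
    rw [Finset.disjoint_left]
    intro a ha ha'
    have h1 := mem_sameSide.mp ha
    have h2 := hC'.1 a ha'
    omega
  -- any cover of [0,n) has weight ≥ s_l + min suffix
  have hLB : ∀ C' : Finset ℕ, IsMWVCOn ω (l + 1) n C' → ∀ D, IsCoverOn 0 n D →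
      wsum ω (sameSide l) + wsum ω C' ≤ wsum ω D := by
    intro C' hC' D hD
    set D1 := D.filter (fun j => j < l + 1) with hD1
    set D2 := D.filter (fun j => ¬ j < l + 1) with hD2
    have hsum : wsum ω D1 + wsum ω D2 = wsum ω D := by
      unfold wsum; rw [hD1, hD2]; exact Finset.sum_filter_add_sum_filter_not D _ ω
    have hc1 : IsCoverOn 0 (l + 1) D1 := by
      constructor
      · intro j hj
        have := (Finset.mem_filter.mp hj).2; omega
      · intro i _ hi
        rcases hD.2 i (by omega) (by omega) with h | h
        · left; exact Finset.mem_filter.mpr ⟨h, by omega⟩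
        · right; exact Finset.mem_filter.mpr ⟨h, by omega⟩
    have hc2 : IsCoverOn (l + 1) n D2 := by
      constructor
      · intro j hj
        have h1 := (Finset.mem_filter.mp hj).2
        have h2 := hD.1 j (Finset.mem_filter.mp hj).1
        omega
      · intro i hli hi
        rcases hD.2 i (by omega) hi with h | h
        · left; exact Finset.mem_filter.mpr ⟨h, by omega⟩
        · right; exact Finset.mem_filter.mpr ⟨h, by omega⟩
    have g1 := prefixLB ω l hcc hfirst D1 hc1
    have g2 := hC'.2 D2 hc2
    linarith
  constructor
  · intro C C' hC hC'
    have h1 : wsum ω C ≤ wsum ω (sameSide l) + wsum ω C' := by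
      rw [← hdisj C' hC'.1]
      exact hC.2 _ (hunion C' hC'.1)
    have h2 := hLB C' hC' C hC.1
    linarith
  · intro C' hC'
    refine ⟨hunion C' hC'.1, fun D hD => ?_⟩
    rw [hdisj C' hC'.1]
    exact hLB C' hC' D hD
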